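/- In the Paley graph P(a) (a a prime power with a ≡ 1 mod 4), the independence number satisfies α(P(a)) ≤ √a. Consequently, if a ≤ (r-1)² then α(P(a)) ≤ r - 1. -/

import Mathlib

open Finset

lemma indep_sq_le {F : Type*} [Field F] [Fintype F] [DecidableEq F]
    (hchar : ringChar F ≠ 2) (S : Finset F)
    (hS : ∀ x ∈ S, ∀ y ∈ S, x ≠ y → ¬ IsSquare (x - y)) :
    S.card ^ 2 ≤ Fintype.card F := by
  obtain ⟨m, hm⟩ := FiniteField.exists_nonsquare (F := F) hchar
  have hm0 : m ≠ 0 := fun h => hm (h ▸ IsSquare.zero)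
  have key : ∀ u : F, ¬IsSquare u → IsSquare (m * u) := by
    intro u hu
    have hu0 : u ≠ 0 := fun h => hu (h ▸ IsSquare.zero)
    have h1 := quadraticChar_neg_one_iff_not_isSquare.mpr hm
    have h2 := quadraticChar_neg_one_iff_not_isSquare.mpr hu
    have hmul : quadraticChar F (m * u) = 1 := by rw [map_mul, h1, h2]; ring
    exact (quadraticChar_one_iff_isSquare (mul_ne_zero hm0 hu0)).mp hmul
  have hcard : (S ×ˢ S).card ≤ Fintype.card F := by
    rw [← Finset.card_univ]
    apply Finset.card_le_card_of_injOn (fun p : F × F => p.2 - m * p.1)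
      (fun _ _ => mem_univ _)
    rintro ⟨x₁, y₁⟩ h1 ⟨x₂, y₂⟩ h2 heq
    simp only [Finset.mem_coe, Finset.mem_product] at h1 h2
    simp only at heq
    by_cases hx : x₁ = x₂
    · subst hx
      have : y₁ = y₂ := by linear_combination heq
      simp [this]
    · exfalso
      have hd : y₁ - y₂ = m * (x₁ - x₂) := by linear_combination heq
      have hx' : ¬ IsSquare (x₁ - x₂) := hS _ h1.1 _ h2.1 hx
      have hsq : IsSquare (y₁ - y₂) := hd ▸ key _ hx'
      have hne : y₁ ≠ y₂ := by
        intro h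
        apply hx
        have : m * (x₁ - x₂) = 0 := by rw [← hd, h, sub_self]
        have := (mul_eq_zero.mp this).resolve_left hm0
        exact sub_eq_zero.mp this
      exact hS _ h1.2 _ h2.2 hne hsq
  simpa [Finset.card_product, sq] using hcard

/-- The independence number of a graph: the clique number of the complement. -/
noncomputable def SimpleGraph.indepNum' {V : Type*} (G : SimpleGraph V) : ℕ :=
  Gᶜ.cliqueNum

/-- The Paley graph on a finite field `F` (with `|F| ≡ 1 (mod 4)` this symmetrization
agrees with the usual definition): `x ~ y` iff `x ≠ y` and `x - y` is a nonzero square. -/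
def paleyGraph (F : Type*) [Field F] : SimpleGraph F :=
  SimpleGraph.fromRel (fun x y => IsSquare (x - y))

/-- In the Paley graph `P(a)` (`a` a prime power with `a ≡ 1 (mod 4)`), the independence
number satisfies `α(P(a)) ≤ √a`.  Consequently, if `a ≤ (r-1)²` then `α(P(a)) ≤ r - 1`. -/
theorem stmt_8 (F : Type*) [Field F] [Fintype F] (hq : Fintype.card F % 4 = 1) (r : ℕ) :
    ((paleyGraph F).indepNum' : ℝ) ≤ Real.sqrt (Fintype.card F) ∧
      (Fintype.card F ≤ (r - 1) ^ 2 → (paleyGraph F).indepNum' ≤ r - 1) := by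
  classical
  have hchar : ringChar F ≠ 2 := by
    intro h
    have h2 := FiniteField.even_card_iff_char_two.mp h
    omega
  obtain ⟨S, hSc, hScard⟩ := SimpleGraph.exists_isNClique_cliqueNum (G := (paleyGraph F)ᶜ)
  have hind : ∀ x ∈ S, ∀ y ∈ S, x ≠ y → ¬ IsSquare (x - y) := by
    intro x hx y hy hxy hsq
    have hadj := hSc (Finset.mem_coe.mpr hx) (Finset.mem_coe.mpr hy) hxy
    rw [SimpleGraph.compl_adj] at hadj
    exact hadj.2 ⟨hxy, Or.inl hsq⟩
  have hkey : (paleyGraph F).indepNum' ^ 2 ≤ Fintype.card F := by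
    have := indep_sq_le hchar S hind
    rwa [hScard] at this
  constructor
  · rw [show ((paleyGraph F).indepNum' : ℝ) = Real.sqrt (((paleyGraph F).indepNum' : ℝ) ^ 2) by
      rw [Real.sqrt_sq (by positivity)]]
    apply Real.sqrt_le_sqrt
    exact_mod_cast hkey
  · intro hle
    have : (paleyGraph F).indepNum' ^ 2 ≤ (r - 1) ^ 2 := le_trans hkey hle
    exact (Nat.pow_le_pow_iff_left (by norm_num)).mp this
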